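/- Let F_q have q = p^s elements with p prime and let b be a nonzero element of F_q. The polynomial b^p·x^p - b·x - 1 is irreducible over F_q if and only if p does not divide s. -/

import Mathlib

open Polynomial

private lemma natCast_pow_char' {R : Type*} [CommRing R] (p : ℕ) [Fact p.Prime] [CharP R p]
    (k : ℕ) : (k : R) ^ p = (k : R) := by
  have h : k ^ p ≡ k [MOD p] := by
    have h2 := ZMod.pow_card (k : ZMod p)
    rwa [← Nat.cast_pow, ZMod.natCast_eq_natCast_iff] at h2
  calc (k : R) ^ p = ((k ^ p : ℕ) : R) := by push_cast; ring
    _ = (k : R) := (CharP.natCast_eq_natCast R p).mpr h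

private lemma pow_p_pow_eq {R : Type*} [CommRing R] (p : ℕ) [Fact p.Prime] [CharP R p]
    {x : R} (hx : x ^ p = x + 1) (k : ℕ) : x ^ (p ^ k) = x + k := by
  induction k with
  | zero => simp
  | succ k ih =>
    rw [pow_succ, pow_mul, ih, add_pow_char, hx, natCast_pow_char']
    push_cast
    ring

private lemma pow_p_pow_self {R : Type*} [Monoid R] {x : R} {p : ℕ} (hx : x ^ p = x) (k : ℕ) :
    x ^ (p ^ k) = x := by
  induction k with
  | zero => simp
  | succ k ih => rw [pow_succ, pow_mul, ih, hx]

private lemma g_natDegree {F : Type*} [Field F] {p : ℕ} (hp : 1 < p) :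
    (X ^ p - X - 1 : F[X]).natDegree = p := by
  compute_degree
  · rw [if_neg (by omega), if_neg (by omega)]
    norm_num
  · omega

private lemma g_monic {F : Type*} [Field F] {p : ℕ} (hp : 1 < p) :
    (X ^ p - X - 1 : F[X]).Monic := by
  monicity
  · rw [if_pos (by omega), if_neg (by omega)]
    norm_num
  · omega

private lemma exists_eq_of_pow_card {F K : Type*} [Field F] [Fintype F] [Field K] [Algebra F K]
    {t : K} (ht : t ^ (Fintype.card F) = t) : ∃ a : F, algebraMap F K a = t := by
  set q := Fintype.card F with hq
  have h1 : 1 < q := Fintype.one_lt_card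
  have hroots : ((X : F[X]) ^ q - X).roots = Finset.univ.val :=
    FiniteField.roots_X_pow_card_sub_X F
  have hndeg : ((X : F[X]) ^ q - X).natDegree = q :=
    FiniteField.X_pow_card_sub_X_natDegree_eq F h1
  have hsplits : ((X : F[X]) ^ q - X).Splits := by
    rw [splits_iff_card_roots, hroots, hndeg]
    simp [Finset.card_univ, hq]
  have hFne : ((X : F[X]) ^ q - X) ≠ 0 := FiniteField.X_pow_card_sub_X_ne_zero F h1
  have hmap : ((X : F[X]) ^ q - X).map (algebraMap F K) = (X : K[X]) ^ q - X := by
    simp [Polynomial.map_sub, Polynomial.map_pow]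
  have hne : ((X : F[X]) ^ q - X).map (algebraMap F K) ≠ 0 :=
    (Polynomial.map_ne_zero_iff (algebraMap F K).injective).mpr hFne
  have htroot : t ∈ (((X : F[X]) ^ q - X).map (algebraMap F K)).roots := by
    rw [mem_roots hne, hmap]
    simp [IsRoot, ht]
  rw [hsplits.roots_map _, hroots] at htroot
  obtain ⟨a, -, ha⟩ := Multiset.mem_map.mp htroot
  exact ⟨a, ha⟩

private lemma AS_no_divisor {F : Type*} [Field F] [Fintype F] (p s : ℕ) [Fact p.Prime]
    [CharP F p] (hcard : Fintype.card F = p ^ s) (hps : ¬ p ∣ s) (h : F[X]) (hm : h.Monic)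
    (hdvd : h ∣ (X ^ p - X - 1 : F[X])) (h0 : 0 < h.natDegree) (hlt : h.natDegree < p) :
    False := by
  classical
  have hp1 : 1 < p := (Fact.out : p.Prime).one_lt
  set g : F[X] := X ^ p - X - 1 with hg
  set K := AlgebraicClosure F with hK
  set φ := algebraMap F K with hφ
  haveI : CharP K p := charP_of_injective_algebraMap φ.injective p
  have hg_map : g.map φ = X ^ p - X - 1 := by
    simp [hg, Polynomial.map_sub, Polynomial.map_pow, Polynomial.map_one]
  have hgdeg : (g.map φ).natDegree = p := by rw [hg_map]; exact g_natDegree hp1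
  have hdeg : (g.map φ).degree ≠ 0 := by
    rw [degree_eq_natDegree (fun h0 => by simp [h0] at hgdeg; omega), hgdeg]
    exact_mod_cast (by omega : (p : ℤ) ≠ 0)
  obtain ⟨α, hα⟩ := IsAlgClosed.exists_root (g.map φ) hdeg
  have hαp : α ^ p = α + 1 := by
    have h2 : α ^ p - α - 1 = 0 := by
      have := hα
      rwa [hg_map, IsRoot, eval_sub, eval_sub, eval_pow, eval_X, eval_one] at this
    rwa [sub_sub, sub_eq_zero] at h2
  have hKsplit : (h.map φ).Splits := IsAlgClosed.splits _
  have hcard_roots : (h.map φ).roots.card = h.natDegree := by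
    rw [← natDegree_map (algebraMap F K) (p := h)]
    exact splits_iff_card_roots.mp hKsplit
  have hroot_mem : ∀ r ∈ (h.map φ).roots, ∃ a : F, φ a = r - α := by
    intro r hr
    have hrg : (g.map φ).eval r = 0 := by
      have hdvd' : h.map φ ∣ g.map φ := Polynomial.map_dvd φ hdvd
      exact eval_eq_zero_of_dvd_of_eval_eq_zero hdvd' ((mem_roots'.mp hr).2)
    have hrp : r ^ p = r + 1 := by
      rwa [hg_map, eval_sub, eval_sub, eval_pow, eval_X, eval_one, sub_sub, sub_eq_zero] at hrg
    have ht : (r - α) ^ p = r - α := by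
      rw [sub_pow_char, hαp, hrp]; ring
    have ht2 : (r - α) ^ (Fintype.card F) = r - α := by
      rw [hcard]; exact pow_p_pow_self ht s
    exact exists_eq_of_pow_card ht2
  have hsum : (h.map φ).roots.sum = -(φ h.nextCoeff) := by
    have h2 := hKsplit.nextCoeff_eq_neg_sum_roots_of_monic (hm.map φ)
    rw [nextCoeff_map φ.injective] at h2
    rw [h2, neg_neg]
  set S := φ.fieldRange with hS
  set R := (h.map φ).roots with hR
  set T := R.map (fun r => r - α) with hT
  have hTsum : T.sum ∈ S := by
    apply multiset_sum_mem
    intro x hx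
    obtain ⟨r, hr, rfl⟩ := Multiset.mem_map.mp hx
    obtain ⟨a, ha⟩ := hroot_mem r hr
    exact ⟨a, ha⟩
  have hRsum : R.sum ∈ S := by
    rw [hsum]
    exact neg_mem ⟨h.nextCoeff, rfl⟩
  have hsplit_sum : R.sum = T.sum + R.card • α := by
    have hmapid : R.map (fun r => (r - α) + α) = R := by simp
    calc R.sum = (R.map (fun r => (r - α) + α)).sum := by rw [hmapid]
      _ = T.sum + (R.map (fun _ => α)).sum := by rw [Multiset.sum_map_add]
      _ = T.sum + R.card • α := by rw [Multiset.map_const', Multiset.sum_replicate]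
  have hdα : (h.natDegree : K) * α ∈ S := by
    have : R.card • α = R.sum - T.sum := by rw [hsplit_sum]; ring
    rw [← hcard_roots, ← nsmul_eq_mul, this]
    exact sub_mem hRsum hTsum
  have hd0 : (h.natDegree : K) ≠ 0 := by
    intro h2
    have := (CharP.cast_eq_zero_iff K p _).mp h2
    have := Nat.le_of_dvd h0 this
    omega
  have hαS : α ∈ S := by
    have hdS : (h.natDegree : K) ∈ S := natCast_mem S _
    have : α = ((h.natDegree : K))⁻¹ * ((h.natDegree : K) * α) := by
      rw [← mul_assoc, inv_mul_cancel₀ hd0, one_mul]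
    rw [this]
    exact mul_mem (inv_mem hdS) hdα
  obtain ⟨a, ha⟩ := hαS
  have hfix : α ^ (p ^ s) = α := by
    rw [← hcard, ← ha, ← map_pow, FiniteField.pow_card]
  rw [pow_p_pow_eq p hαp s] at hfix
  have hs0 : (s : K) = 0 := add_eq_left.mp hfix
  exact hps ((CharP.cast_eq_zero_iff K p s).mp hs0)

private lemma AS_root {F : Type*} [Field F] [Fintype F] (p s : ℕ) [Fact p.Prime] [CharP F p]
    (hcard : Fintype.card F = p ^ s) (hps : p ∣ s) : ∃ x : F, x ^ p = x + 1 := by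
  classical
  have hp1 : 1 < p := (Fact.out : p.Prime).one_lt
  set g : F[X] := X ^ p - X - 1 with hg
  have hgm : g.Monic := g_monic hp1
  have hgd : g.natDegree = p := g_natDegree hp1
  have hgu : ¬ IsUnit g := by
    intro hu
    have := natDegree_eq_zero_of_isUnit hu
    omega
  set I := Ideal.span {g} with hI
  have hIne : I ≠ ⊤ := by
    rw [hI, Ne, Ideal.span_singleton_eq_top]
    exact hgu
  haveI : Nontrivial (F[X] ⧸ I) := Ideal.Quotient.nontrivial_iff.mpr hIne
  set π : F[X] →+* F[X] ⧸ I := Ideal.Quotient.mk I with hπ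
  haveI : CharP (F[X] ⧸ I) p :=
    charP_of_injective_ringHom (π.comp (C : F →+* F[X])).injective p
  set x : F[X] ⧸ I := π X with hx
  have hxp : x ^ p = x + 1 := by
    have h0 : π g = 0 := Ideal.Quotient.eq_zero_iff_mem.mpr (Ideal.subset_span rfl)
    have h1 : x ^ p - x - 1 = 0 := by
      rw [hg] at h0
      simpa [map_sub, map_pow, map_one] using h0
    rwa [sub_sub, sub_eq_zero] at h1
  have hq : x ^ (p ^ s) = x := by
    rw [pow_p_pow_eq p hxp s, (CharP.cast_eq_zero_iff _ p s).mpr hps, add_zero]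
  have hdvd : g ∣ X ^ (Fintype.card F) - X := by
    rw [← Ideal.mem_span_singleton, ← hI, ← Ideal.Quotient.eq_zero_iff_mem]
    rw [hcard]
    simpa [map_sub, map_pow] using sub_eq_zero.mpr hq
  have hsplits : (X ^ (Fintype.card F) - X : F[X]).Splits := by
    rw [splits_iff_card_roots, FiniteField.roots_X_pow_card_sub_X F,
      FiniteField.X_pow_card_sub_X_natDegree_eq F Fintype.one_lt_card]
    simp [Finset.card_univ]
  have hgsplit : g.Splits :=
    Splits.of_dvd hsplits (FiniteField.X_pow_card_sub_X_ne_zero F Fintype.one_lt_card)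
      hdvd
  have hdeg : g.degree ≠ 0 := by
    rw [degree_eq_natDegree hgm.ne_zero, hgd]
    exact_mod_cast (by omega : (p : ℤ) ≠ 0)
  obtain ⟨x0, hx0⟩ := hgsplit.exists_eval_eq_zero hdeg
  refine ⟨x0, ?_⟩
  rwa [hg, eval_sub, eval_sub, eval_pow, eval_X, eval_one, sub_sub, sub_eq_zero] at hx0

theorem stmt13 {F : Type*} [Field F] [Fintype F] (p s : ℕ) [Fact p.Prime]
    (hcard : Fintype.card F = p ^ s) (b : F) (hb : b ≠ 0) :
    Irreducible (C (b ^ p) * X ^ p - C b * X - 1 : Polynomial F) ↔ ¬ p ∣ s := by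
  classical
  have hp : p.Prime := Fact.out
  have hp1 : 1 < p := hp.one_lt
  have hs0 : s ≠ 0 := by
    rintro rfl
    have := Fintype.one_lt_card (α := F)
    simp [hcard] at this
  haveI : CharP F p := by
    obtain ⟨n, hrc, hn⟩ := FiniteField.card F (ringChar F)
    have hdvd : p ∣ ringChar F := by
      have h1 : p ∣ p ^ s := dvd_pow_self p hs0
      rw [← hcard, hn] at h1
      exact hp.dvd_of_dvd_pow h1
    have : ringChar F = p := ((Nat.prime_dvd_prime_iff_eq hp hrc).mp hdvd).symm
    have h2 := ringChar.charP F
    rwa [this] at h2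
  letI := invertibleOfNonzero hb
  set e : F[X] ≃ₐ[F] F[X] := algEquivCMulXAddC b 0 with he
  have hce : e (X ^ p - X - 1 : F[X]) = C (b ^ p) * X ^ p - C b * X - 1 := by
    show aeval (C b * X + C 0) (X ^ p - X - 1 : F[X]) = _
    rw [map_sub, map_sub, map_one, map_pow, aeval_X]
    simp [mul_pow, C_pow, C_0]
  rw [← hce, MulEquiv.irreducible_iff]
  have hgd : (X ^ p - X - 1 : F[X]).natDegree = p := g_natDegree hp1
  constructor
  · intro hirr hps
    obtain ⟨x, hx⟩ := AS_root p s hcard hps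
    have hroot : IsRoot (X ^ p - X - 1 : F[X]) x := by
      rw [IsRoot, eval_sub, eval_sub, eval_pow, eval_X, eval_one, hx]
      ring
    obtain ⟨k, hk⟩ := dvd_iff_isRoot.mpr hroot
    rcases hirr.isUnit_or_isUnit hk with hu | hu
    · exact Polynomial.not_isUnit_X_sub_C x hu
    · have hk0 : k ≠ 0 := by
        rintro rfl
        rw [mul_zero] at hk
        rw [hk] at hgd
        simp at hgd
        omega
      have hkdeg := natDegree_eq_zero_of_isUnit hu
      rw [hk, natDegree_mul (X_sub_C_ne_zero x) hk0, natDegree_X_sub_C, hkdeg] at hgd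
      omega
  · intro hps
    have hgm : (X ^ p - X - 1 : F[X]).Monic := g_monic hp1
    have hne1 : (X ^ p - X - 1 : F[X]) ≠ 1 := by
      intro h1
      rw [h1] at hgd
      simp at hgd
      omega
    rw [hgm.irreducible_iff_lt_natDegree_lt hne1]
    intro q hq hmem hdvd
    rw [hgd] at hmem
    obtain ⟨hq0, hq2⟩ := Finset.mem_Ioc.mp hmem
    exact AS_no_divisor p s hcard hps q hq hdvd hq0
      (lt_of_le_of_lt hq2 (Nat.div_lt_self (by omega) (by omega)))
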